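/- Let L₀ ⊆ L be first-order languages such that every symbol of L not in L₀ is a relation symbol. Let K be a λ-bounded strong Fraïssé class of L-structures whose class of reducts K↾L₀ is a strong Fraïssé class, and suppose K has the extended strong amalgamation property over L₀. Let M₀ be an L₀-structure satisfying the semantic λ-Fraïssé theory of K↾L₀. Then the set D_{A,B} is dense in the poset Fn_{M₀}(K, λ): for all A, B ∈ K[M₀] with A ⊆ B and every C ∈ K[M₀] with A ⊆ C, there exist C' ∈ K[M₀] with C ⊆ C' and a structure B* ∈ K[M₀] with A ⊆ B* ⊆ C' together with an isomorphism from B to B* fixing A pointwise. -/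

import Mathlib

open FirstOrder FirstOrder.Language Set Cardinal

universe u

noncomputable section

/-- A condition over `M₀`: an `L`-structure whose reduct to `L₀` (along `φ : L₀ →ᴸ L`) is a
substructure of the `L₀`-structure `M₀`. -/
structure Cond {L₀ L : FirstOrder.Language.{u, u}} (φ : L₀ →ᴸ L) (M₀ : Type u)
    [L₀.Structure M₀] : Type u where
  carrier : L₀.Substructure M₀
  str : L.Structure carrier
  reduct_eq : @FirstOrder.Language.LHom.reduct L₀ L φ carrier str =
    FirstOrder.Language.Substructure.inducedStructure

variable {L₀ L : FirstOrder.Language.{u, u}} {φ : L₀ →ᴸ L} {M₀ : Type u} [L₀.Structure M₀]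

/-- The bundled `L`-structure underlying a condition. -/
def Cond.bundled (A : Cond φ M₀) : CategoryTheory.Bundled.{u} L.Structure :=
  ⟨A.carrier, A.str⟩

/-- `A` is a substructure of `B`: the inclusion of underlying sets is an `L`-embedding. -/
def Cond.le (A B : Cond φ M₀) : Prop :=
  ∃ f : @FirstOrder.Language.Embedding L A.carrier B.carrier A.str B.str,
    ∀ x : A.carrier, (f x : M₀) = (x : M₀)

/-- A strong Fraïssé class: closed under isomorphism, with the hereditary, joint embedding,
amalgamation, and strong (disjoint) amalgamation properties. -/
structure IsStrongFraisseClass {L' : FirstOrder.Language.{u, u}}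
    (K : Set (CategoryTheory.Bundled.{u} L'.Structure)) : Prop where
  isoClosed : ∀ A B : CategoryTheory.Bundled.{u} L'.Structure,
    Nonempty (A ≃[L'] B) → A ∈ K → B ∈ K
  hereditary : ∀ A : CategoryTheory.Bundled.{u} L'.Structure, A ∈ K →
    ∀ S : L'.Substructure A,
      (⟨(S : Type u), inferInstance⟩ : CategoryTheory.Bundled.{u} L'.Structure) ∈ K
  jep : ∀ A ∈ K, ∀ B ∈ K, ∃ C ∈ K, Nonempty (A ↪[L'] C) ∧ Nonempty (B ↪[L'] C)
  ap : ∀ (A B C : CategoryTheory.Bundled.{u} L'.Structure) (i₁ : A ↪[L'] B) (i₂ : A ↪[L'] C),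
    A ∈ K → B ∈ K → C ∈ K →
      ∃ (D : CategoryTheory.Bundled.{u} L'.Structure) (j₁ : B ↪[L'] D) (j₂ : C ↪[L'] D),
        D ∈ K ∧ j₁.comp i₁ = j₂.comp i₂
  sap : ∀ (A B C : CategoryTheory.Bundled.{u} L'.Structure) (i₁ : A ↪[L'] B) (i₂ : A ↪[L'] C),
    A ∈ K → B ∈ K → C ∈ K →
      ∃ (D : CategoryTheory.Bundled.{u} L'.Structure) (j₁ : B ↪[L'] D) (j₂ : C ↪[L'] D),
        D ∈ K ∧ j₁.comp i₁ = j₂.comp i₂ ∧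
          Set.range j₁ ∩ Set.range j₂ = Set.range (j₁.comp i₁)

/-- Every member of `K` is generated by a set of size `< λ` (`K` is `λ`-bounded). -/
def IsBounded {L' : FirstOrder.Language.{u, u}}
    (K : Set (CategoryTheory.Bundled.{u} L'.Structure)) (lam : Cardinal.{u}) : Prop :=
  ∀ A : CategoryTheory.Bundled.{u} L'.Structure, A ∈ K →
    ∃ s : Set A, #s < lam ∧ Substructure.closure L' s = ⊤

/-- The reduct of a bundled `L`-structure along `φ : L₀ →ᴸ L`. -/
def reductBundled (φ : L₀ →ᴸ L) (A : CategoryTheory.Bundled.{u} L.Structure) :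
    CategoryTheory.Bundled.{u} L₀.Structure :=
  ⟨A, @FirstOrder.Language.LHom.reduct L₀ L φ A A.str⟩

/-- The class of reducts (up to isomorphism) of members of `K`: `K↾L₀`. -/
def KBot (φ : L₀ →ᴸ L) (K : Set (CategoryTheory.Bundled.{u} L.Structure)) :
    Set (CategoryTheory.Bundled.{u} L₀.Structure) :=
  {X | ∃ A ∈ K, Nonempty (X ≃[L₀] reductBundled φ A)}

/-- `K` has the extended strong amalgamation property over `L₀`: any strong amalgamation
prescribed at the level of `L₀`-structures can be expanded to one in `K`. -/
def ExtendedSAP (φ : L₀ →ᴸ L) (K : Set (CategoryTheory.Bundled.{u} L.Structure)) : Prop :=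
  ∀ (D : Type u) [L₀.Structure D],
    (⟨D, inferInstance⟩ : CategoryTheory.Bundled.{u} L₀.Structure) ∈ KBot φ K →
    ∀ A B C : Cond φ D, A.bundled ∈ K → B.bundled ∈ K → C.bundled ∈ K →
      A.le B → A.le C →
      ((B.carrier : Set D) ∩ (C.carrier : Set D) = (A.carrier : Set D)) →
      Substructure.closure L₀ ((B.carrier : Set D) ∪ (C.carrier : Set D)) = ⊤ →
      ∃ D' : Cond φ D, D'.bundled ∈ K ∧ D'.carrier = ⊤ ∧ B.le D' ∧ C.le D'

/-- Every function symbol of `L` comes from `L₀`, i.e. `L ∖ L₀` is relational. -/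
def ComplementRelational (φ : L₀ →ᴸ L) : Prop :=
  ∀ n, Function.Surjective (fun f : L₀.Functions n => φ.onFunction f)

/-- Same quantifier-free type. -/
def SameQfType (L' : FirstOrder.Language.{u, u}) {ι : Type*} {M N : Type u}
    [L'.Structure M] [L'.Structure N] (a : ι → M) (b : ι → N) : Prop :=
  ∀ ψ : L'.Formula ι, ψ.IsQF → (ψ.Realize a ↔ ψ.Realize b)

/-- `M` satisfies the semantic `λ`-Fraïssé theory of a class `KB` of `L₀`-structures:
(1) every generating tuple (of size `< λ`) of a member of `KB` is realized in `M` up to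
quantifier-free type; (2) the corresponding extension property holds. -/
def SatisfiesFraisseTheory (KB : Set (CategoryTheory.Bundled.{u} L₀.Structure))
    (M : Type u) [L₀.Structure M] (lam : Cardinal.{u}) : Prop :=
  (∀ X : CategoryTheory.Bundled.{u} L₀.Structure, X ∈ KB →
    ∀ (ι : Type u), #ι < lam → ∀ x : ι → X,
      Substructure.closure L₀ (Set.range x) = ⊤ → ∃ c : ι → M, SameQfType L₀ x c) ∧
  (∀ Y : CategoryTheory.Bundled.{u} L₀.Structure, Y ∈ KB →
    ∀ (ι ι' : Type u), #ι < lam → #ι' < lam → ∀ (x : ι → Y) (y : ι' → Y),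
      (⟨((Substructure.closure L₀ (Set.range x) : L₀.Substructure Y) : Type u), inferInstance⟩ :
        CategoryTheory.Bundled.{u} L₀.Structure) ∈ KB →
      Substructure.closure L₀ (Set.range x ∪ Set.range y) = ⊤ →
      ∀ c : ι → M, SameQfType L₀ x c →
        ∃ d : ι' → M, SameQfType L₀ (Sum.elim x y) (Sum.elim c d))

section Helpers

/-- Quantifier-free formulas transfer along embeddings (formula version). -/
theorem qf_realize_embedding' {L' : FirstOrder.Language.{u, u}} {M N : Type u}
    [L'.Structure M] [L'.Structure N] (g : M ↪[L'] N) {ι : Type u} (ψ : L'.Formula ι)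
    (hψ : ψ.IsQF) (v : ι → M) : ψ.Realize (⇑g ∘ v) ↔ ψ.Realize v := by
  have h := hψ.realize_embedding g (v := v) (xs := default)
  rwa [show (⇑g ∘ (default : Fin 0 → M)) = default from Subsingleton.elim _ _] at h

/-- Extensionality for structures. -/
theorem structure_ext' {L' : FirstOrder.Language.{u, u}} {M : Type u}
    (S T : L'.Structure M)
    (hf : ∀ (n : ℕ) (f : L'.Functions n) (x : Fin n → M),
      @Structure.funMap L' M S n f x = @Structure.funMap L' M T n f x)
    (hr : ∀ (n : ℕ) (r : L'.Relations n) (x : Fin n → M),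
      @Structure.RelMap L' M S n r x ↔ @Structure.RelMap L' M T n r x) : S = T := by
  rcases S with ⟨Sf, Sr⟩; rcases T with ⟨Tf, Tr⟩
  have h1 : @Sf = @Tf := by funext n f x; exact hf n f x
  have h2 : @Sr = @Tr := by funext n r x; exact propext (hr n r x)
  cases h1; cases h2; rfl

/-- An embedding which is surjective is an equivalence. -/
def equivOfSurjEmb {L' : FirstOrder.Language.{u, u}} {M N : Type u} [L'.Structure M]
    [L'.Structure N] (F : M ↪[L'] N) (hs : Function.Surjective ⇑F) : M ≃[L'] N :=
  { toEquiv := Equiv.ofBijective ⇑F ⟨F.injective, hs⟩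
    map_fun' := F.map_fun'
    map_rel' := F.map_rel' }

variable {L₀ L : FirstOrder.Language.{u, u}} {φ : L₀ →ᴸ L}

/-- Translation of `L`-terms to `L₀`-terms when `L ∖ L₀` is relational. -/
noncomputable def termReduct (hrel : ComplementRelational φ) {α : Type u} :
    L.Term α → L₀.Term α
  | .var i => .var i
  | .func f ts => .func ((hrel _) f).choose fun i => termReduct hrel (ts i)

theorem realize_termReduct (hrel : ComplementRelational φ) {α : Type u} {P : Type u}
    [iP : L.Structure P] (t : L.Term α) (v : α → P) :
    @Term.realize L₀ P (φ.reduct P) α v (termReduct hrel t) = t.realize v := by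
  induction t with
  | var i => rfl
  | func f ts ih =>
    show Structure.funMap (L := L) (φ.onFunction ((hrel _) f).choose) _ =
      Structure.funMap f fun i => (ts i).realize v
    have hsp : φ.onFunction ((hrel _) f).choose = f := ((hrel _) f).choose_spec
    rw [hsp]
    exact congrArg _ (funext fun i => ih i)

/-- View an `L`-embedding as an `L₀`-embedding between the reducts. -/
def reductEmb (φ : L₀ →ᴸ L) {M N : Type u} [iM : L.Structure M] [iN : L.Structure N]
    (g : M ↪[L] N) : @FirstOrder.Language.Embedding L₀ M N (φ.reduct M) (φ.reduct N) :=
  letI := φ.reduct M; letI := φ.reduct N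
  { toEmbedding := g.toEmbedding
    map_fun' := fun {n} f x => g.map_fun (φ.onFunction f) x
    map_rel' := fun {n} r x => g.map_rel (φ.onRelation r) x }

@[simp] theorem reductEmb_coe {M N : Type u} [iM : L.Structure M] [iN : L.Structure N]
    (g : M ↪[L] N) : ⇑(reductEmb φ g) = ⇑g := rfl

/-- `L₀`-closure coincides with `L`-closure when `L ∖ L₀` is relational. -/
theorem closure_reduct_coe (hrel : ComplementRelational φ) {P : Type u} [iP : L.Structure P]
    (s : Set P) :
    ((@Substructure.closure L₀ P (φ.reduct P) s : @FirstOrder.Language.Substructure L₀ P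
      (φ.reduct P)) : Set P) = ((Substructure.closure L s : L.Substructure P) : Set P) := by
  letI := φ.reduct P
  rw [Substructure.coe_closure_eq_range_term_realize,
    Substructure.coe_closure_eq_range_term_realize]
  apply subset_antisymm
  · rintro _ ⟨t, rfl⟩
    exact ⟨φ.onTerm t, by rw [LHom.realize_onTerm]⟩
  · rintro _ ⟨t, rfl⟩
    exact ⟨termReduct hrel t, realize_termReduct hrel t _⟩

/-- A tuple with the same quantifier-free type as a generating tuple induces an embedding. -/
theorem exists_embedding_of_sameQfType {L' : FirstOrder.Language.{u, u}} {P Q : Type u}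
    [L'.Structure P] [L'.Structure Q] {ι : Type u} {x : ι → P} {c : ι → Q}
    (hs : SameQfType L' x c) (hgen : Substructure.closure L' (Set.range x) = ⊤) :
    ∃ h : P ↪[L'] Q, ∀ i, h (x i) = c i := by
  classical
  have hterm : ∀ a : P, ∃ t : L'.Term ι, t.realize x = a := by
    intro a
    have ha : a ∈ Substructure.closure L' (Set.range x) := by
      rw [hgen]; exact Substructure.mem_top a
    obtain ⟨t, ht⟩ := Substructure.mem_closure_iff_exists_term.1 ha
    refine ⟨t.relabel fun j => j.2.choose, ?_⟩
    rw [Term.realize_relabel, ← ht]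
    have hx : (x ∘ fun j : ↥(Set.range x) => j.2.choose) = (Subtype.val : ↥(Set.range x) → P) :=
      funext fun j => j.2.choose_spec
    rw [hx]
  have keyIff : ∀ t t' : L'.Term ι, t.realize x = t'.realize x ↔ t.realize c = t'.realize c := by
    intro t t'
    have h := hs (t.equal t') (BoundedFormula.IsAtomic.equal _ _).isQF
    rwa [Formula.realize_equal, Formula.realize_equal] at h
  have keyRel : ∀ (n : ℕ) (R : L'.Relations n) (ts : Fin n → L'.Term ι),
      (Structure.RelMap R (fun i => (ts i).realize x) ↔
        Structure.RelMap R fun i => (ts i).realize c) := by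
    intro n R ts
    have h := hs (R.formula ts) (BoundedFormula.IsAtomic.rel R _).isQF
    rwa [Formula.realize_rel, Formula.realize_rel] at h
  choose T hT using hterm
  have hkey : ∀ t : L'.Term ι, (T (t.realize x)).realize c = t.realize c := fun t =>
    (keyIff _ t).1 (hT _)
  refine ⟨{ toFun := fun a => (T a).realize c
            inj' := ?_
            map_fun' := ?_
            map_rel' := ?_ }, ?_⟩
  · intro a b hab
    have h := (keyIff (T a) (T b)).2 hab
    rwa [hT a, hT b] at h
  · intro n f as
    have h1 : Structure.funMap f as = (Term.func f fun i => T (as i)).realize x := by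
      show _ = Structure.funMap f fun i => (T (as i)).realize x
      exact congrArg (Structure.funMap f) (funext fun i => (hT (as i)).symm)
    show (T (Structure.funMap f as)).realize c = _
    rw [h1, hkey]
    show Structure.funMap f (fun i => (T (as i)).realize c) = _
    rfl
  · intro n r as
    have has : as = fun i => (T (as i)).realize x := funext fun i => (hT _).symm
    have h := keyRel n r fun i => T (as i)
    conv_rhs => rw [has]
    exact h.symm
  · intro i
    exact hkey (Term.var i)

end Helpers

/-- If `K` is a `λ`-bounded strong Fraïssé class with `K↾L₀` strong Fraïssé
and the extended strong amalgamation property over `L₀`, and `M₀` satisfies the semantic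
`λ`-Fraïssé theory of `K↾L₀`, then the sets `D_{A,B}` are dense in `Fn_{M₀}(K, λ)`: for all
`A ⊆ B` in `K[M₀]` and every `C ∈ K[M₀]` with `A ⊆ C` there are `C' ⊇ C` in `K[M₀]` and
`B*` with `A ⊆ B* ⊆ C'` isomorphic to `B` over `A`. -/
theorem copy_of_extension_dense {L₀ L : FirstOrder.Language.{u, u}} (φ : L₀ →ᴸ L)
    (hsub : φ.Injective) (hrel : ComplementRelational φ)
    (lam : Cardinal.{u})
    (K : Set (CategoryTheory.Bundled.{u} L.Structure))
    (hK : IsStrongFraisseClass K) (hbdd : IsBounded K lam)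
    (hKbot : IsStrongFraisseClass (KBot φ K))
    (hesap : ExtendedSAP φ K)
    (M₀ : Type u) [L₀.Structure M₀]
    (hM₀ : SatisfiesFraisseTheory (KBot φ K) M₀ lam)
    (A B C : Cond φ M₀)
    (hA : A.bundled ∈ K) (hB : B.bundled ∈ K) (hC : C.bundled ∈ K)
    (hAB : A.le B) (hAC : A.le C) :
    ∃ C' : Cond φ M₀, C'.bundled ∈ K ∧ C.le C' ∧
      ∃ Bs : Cond φ M₀, Bs.bundled ∈ K ∧ A.le Bs ∧ Bs.le C' ∧
        ∃ e : @FirstOrder.Language.Equiv L B.carrier Bs.carrier B.str Bs.str,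
          ∀ x : B.carrier, (x : M₀) ∈ (A.carrier : Set M₀) → ((e x : Bs.carrier) : M₀) = (x : M₀) := by
  classical
  obtain ⟨f, hf⟩ := hAB
  obtain ⟨g, hg⟩ := hAC
  letI iA : L.Structure A.carrier := A.str
  letI iB : L.Structure B.carrier := B.str
  letI iC : L.Structure C.carrier := C.str
  obtain ⟨sB, hsBcard, hsBgen⟩ : ∃ s : Set B.carrier, #s < lam ∧ Substructure.closure L s = ⊤ :=
    hbdd B.bundled hB
  obtain ⟨sC, hsCcard, hsCgen⟩ : ∃ s : Set C.carrier, #s < lam ∧ Substructure.closure L s = ⊤ :=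
    hbdd C.bundled hC
  obtain ⟨D, j₁, j₂, hD, hcomm⟩ := hK.ap A.bundled B.bundled C.bundled f g hA hB hC
  set S : L.Substructure D := Substructure.closure L (Set.range ⇑j₁ ∪ Set.range ⇑j₂) with hSdef
  have hj₁S : ∀ b, j₁ b ∈ S := fun b => Substructure.subset_closure (Or.inl ⟨b, rfl⟩)
  have hj₂S : ∀ a, j₂ a ∈ S := fun a => Substructure.subset_closure (Or.inr ⟨a, rfl⟩)
  let j₁ᵣ : B.carrier ↪[L] ↥S := j₁.codRestrict S hj₁S
  let j₂ᵣ : C.carrier ↪[L] ↥S := j₂.codRestrict S hj₂S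
  letI iN₀ : L₀.Structure ↥S := φ.reduct ↥S
  have hNK : (⟨↥S, inferInstance⟩ : CategoryTheory.Bundled.{u} L.Structure) ∈ K :=
    hK.hereditary D hD S
  have hYK : (⟨↥S, iN₀⟩ : CategoryTheory.Bundled.{u} L₀.Structure) ∈ KBot φ K :=
    ⟨⟨↥S, inferInstance⟩, hNK, ⟨Language.Equiv.refl L₀ ↥S⟩⟩
  let vC : ↥sC → ↥C.carrier := Subtype.val
  let vB : ↥sB → ↥B.carrier := Subtype.val
  have hvC : Set.range vC = sC := Subtype.range_val
  have hvB : Set.range vB = sB := Subtype.range_val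
  let x : ↥sC → ↥S := fun i => j₂ᵣ (vC i)
  let y : ↥sB → ↥S := fun i => j₁ᵣ (vB i)
  let c : ↥sC → M₀ := fun i => ((vC i : ↥C.carrier) : M₀)
  let j₂L : @FirstOrder.Language.Embedding L₀ ↥C.carrier ↥S (φ.reduct ↥C.carrier) iN₀ :=
    reductEmb φ j₂ᵣ
  -- same qf type of x and c
  have hxc : SameQfType L₀ x c := by
    intro ψ hψ
    have h1 : ψ.Realize x ↔
        @Formula.Realize L₀ ↥C.carrier (φ.reduct ↥C.carrier) _ ψ vC :=
      @qf_realize_embedding' L₀ ↥C.carrier ↥S (φ.reduct ↥C.carrier) iN₀ j₂L _ ψ hψ vC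
    have h2 : @Formula.Realize L₀ ↥C.carrier (@FirstOrder.Language.LHom.reduct L₀ L φ ↥C.carrier
        C.str) _ ψ vC ↔ ψ.Realize c := by
      rw [C.reduct_eq]
      exact (qf_realize_embedding' (Substructure.subtype C.carrier) ψ hψ vC).symm
    exact h1.trans h2
  -- generation facts
  have hclos_unionL : Substructure.closure L (Set.range x ∪ Set.range y) = ⊤ := by
    have hinj : Function.Injective ⇑(Substructure.subtype S) := Subtype.coe_injective
    have himg : ⇑(Substructure.subtype S).toHom '' (Set.range x ∪ Set.range y) =
        (⇑j₂.toHom '' sC) ∪ (⇑j₁.toHom '' sB) := by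
      rw [Set.image_union]
      congr 1
      · rw [← Set.range_comp]
        have he : (⇑(Substructure.subtype S).toHom ∘ x) = ⇑j₂.toHom ∘ vC := rfl
        rw [he]; exact (Set.range_comp ..).trans (congrArg _ hvC)
      · rw [← Set.range_comp]
        have he : (⇑(Substructure.subtype S).toHom ∘ y) = ⇑j₁.toHom ∘ vB := rfl
        rw [he]; exact (Set.range_comp ..).trans (congrArg _ hvB)
    have hcl : Substructure.closure L ((⇑j₂.toHom '' sC) ∪ (⇑j₁.toHom '' sB)) = S := by
      erw [Substructure.closure_union, Substructure.closure_image, Substructure.closure_image,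
        hsCgen, hsBgen, hSdef]
      rw [Substructure.closure_union]
      have h1 : Substructure.map j₂.toHom ⊤ = Substructure.closure L (Set.range ⇑j₂) := by
        rw [show Set.range ⇑j₂ = ⇑j₂.toHom '' Set.univ from (Set.image_univ).symm,
          Substructure.closure_image, Substructure.closure_univ]
      have h2 : Substructure.map j₁.toHom ⊤ = Substructure.closure L (Set.range ⇑j₁) := by
        rw [show Set.range ⇑j₁ = ⇑j₁.toHom '' Set.univ from (Set.image_univ).symm,
          Substructure.closure_image, Substructure.closure_univ]
      erw [h1, h2, sup_comm]
    have hmap : (Substructure.closure L (Set.range x ∪ Set.range y)).map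
        (Substructure.subtype S).toHom = ((⊤ : L.Substructure ↥S).map
        (Substructure.subtype S).toHom) := by
      have hrs : Substructure.map (Substructure.subtype S).toHom (⊤ : L.Substructure ↥S) = S := by
        rw [← Hom.range_eq_map]; exact Substructure.range_subtype S
      rw [Substructure.map_closure, himg, hcl, hrs]
    have := congrArg (Substructure.comap (Substructure.subtype S).toHom) hmap
    rwa [Substructure.comap_map_eq_of_injective hinj,
      Substructure.comap_map_eq_of_injective hinj] at this
  have hclos_union₀ : @Substructure.closure L₀ ↥S iN₀ (Set.range x ∪ Set.range y) = ⊤ := by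
    apply SetLike.ext'
    rw [closure_reduct_coe hrel, hclos_unionL]
    rfl
  -- the closure of range x is the image of C
  have hsetx : ((@Substructure.closure L₀ ↥S iN₀ (Set.range x) :
      @FirstOrder.Language.Substructure L₀ ↥S iN₀) : Set ↥S) = Set.range ⇑j₂ᵣ := by
    rw [closure_reduct_coe hrel]
    have hrx : Set.range x = ⇑j₂ᵣ.toHom '' sC := by
      have he : x = ⇑j₂ᵣ.toHom ∘ vC := rfl
      rw [he, Set.range_comp, hvC]
    rw [hrx, Substructure.closure_image, hsCgen]
    rw [show Set.range ⇑j₂ᵣ = ⇑j₂ᵣ.toHom '' Set.univ from (Set.image_univ).symm]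
    rfl
  have hXmem : (⟨((@Substructure.closure L₀ ↥S iN₀ (Set.range x) :
      @FirstOrder.Language.Substructure L₀ ↥S iN₀) : Type u), inferInstance⟩ :
      CategoryTheory.Bundled.{u} L₀.Structure) ∈ KBot φ K := by
    have hmemcl : ∀ a : C.carrier, j₂L a ∈ @Substructure.closure L₀ ↥S iN₀ (Set.range x) := by
      intro a
      have : (j₂ᵣ a : ↥S) ∈ (Set.range ⇑j₂ᵣ) := ⟨a, rfl⟩
      rw [← hsetx] at this
      exact this
    let F := @FirstOrder.Language.Embedding.codRestrict L₀ C.carrier ↥S (φ.reduct C.carrier)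
      iN₀ (@Substructure.closure L₀ ↥S iN₀ (Set.range x)) j₂L hmemcl
    have hFsurj : Function.Surjective ⇑F := by
      rintro ⟨b, hb⟩
      rw [← SetLike.mem_coe, hsetx] at hb
      obtain ⟨a, ha⟩ := hb
      exact ⟨a, Subtype.ext ha⟩
    exact ⟨C.bundled, hC, ⟨@FirstOrder.Language.Equiv.symm L₀ ↥C.carrier _ (φ.reduct ↥C.carrier)
      _ (@equivOfSurjEmb L₀ ↥C.carrier _ (φ.reduct ↥C.carrier) _ F hFsurj)⟩⟩
  -- apply the extension property
  obtain ⟨d, hd⟩ := hM₀.2 ⟨↥S, iN₀⟩ hYK ↥sC ↥sB hsCcard hsBcard x y hXmem hclos_union₀ c hxc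
  obtain ⟨h, hh⟩ := exists_embedding_of_sameQfType hd
    (by rw [Set.Sum.elim_range]; exact hclos_union₀)
  have hhx : ∀ i : ↥sC, h (x i) = c i := fun i => hh (Sum.inl i)
  -- h restricted to the copy of C is the identity
  have KF : ∀ a : C.carrier, h (j₂ᵣ a) = (a : M₀) := by
    intro a
    have ha : a ∈ Substructure.closure L (sC : Set ↥C.carrier) := by
      rw [hsCgen]; exact Substructure.mem_top a
    obtain ⟨t, ht''⟩ := Substructure.mem_closure_iff_exists_term.1 ha
    have ht : Term.realize vC t = a := ht''
    set t₀ : L₀.Term ↥sC := termReduct hrel t with ht₀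
    have e1 : j₂ᵣ a = @Term.realize L₀ ↥S iN₀ _ x t₀ := by
      rw [← ht, ← realize_termReduct hrel t vC, ← ht₀]
      exact (@HomClass.realize_term L₀ ↥C.carrier ↥S (φ.reduct ↥C.carrier) iN₀ _ _ _ _
        j₂L t₀ vC).symm
    rw [e1]
    have e2 : ⇑h ∘ x = c := funext hhx
    have e3 : h (@Term.realize L₀ ↥S iN₀ _ x t₀) = @Term.realize L₀ M₀ _ _ c t₀ := by
      rw [← e2]
      exact (HomClass.realize_term h).symm
    rw [e3]
    have e4' : c = ⇑(Substructure.subtype C.carrier) ∘ vC := rfl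
    have e4 : @Term.realize L₀ M₀ _ _ c t₀ =
        (Substructure.subtype C.carrier) (@Term.realize L₀ ↥C.carrier _ _ vC t₀) := by
      rw [e4']
      exact HomClass.realize_term (Substructure.subtype C.carrier)
    rw [e4]
    have e5 : @Term.realize L₀ ↥C.carrier _ _ vC t₀ = a := by
      rw [← C.reduct_eq, ht₀]
      rw [realize_termReduct hrel t vC]
      exact ht
    rw [e5]
    rfl
  -- build C'
  have hfunmemR : ∀ {n : ℕ} (f' : L₀.Functions n), ClosedUnder f' (Set.range ⇑h) := by
    intro n f' v hv
    choose w hw using hv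
    refine ⟨@Structure.funMap L₀ ↥S iN₀ n f' w, ?_⟩
    rw [Embedding.map_fun]
    exact congrArg _ (funext fun i => hw i)
  let R : L₀.Substructure M₀ := ⟨Set.range ⇑h, hfunmemR⟩
  have hmemR : ∀ z : M₀, z ∈ R ↔ z ∈ Set.range ⇑h := fun z => Iff.rfl
  let eR : ↥S ≃ ↥R := Equiv.ofInjective ⇑h h.injective
  have heR : ∀ a : ↥S, ((eR a : ↥R) : M₀) = h a := fun a => rfl
  have heRsymm : ∀ b : ↥R, h (eR.symm b) = (b : M₀) := fun b => by
    conv_rhs => rw [← Equiv.apply_symm_apply eR b]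
    rfl
  letI strR : L.Structure ↥R := _root_.Equiv.inducedStructure eR
  have reduct_eq_R : @FirstOrder.Language.LHom.reduct L₀ L φ ↥R strR =
      Substructure.inducedStructure := by
    apply structure_ext'
    · intro n f' v
      apply Subtype.ext
      show (eR (Structure.funMap (L := L) (φ.onFunction f') (⇑eR.symm ∘ v)) : M₀) =
        Structure.funMap f' fun i => ((v i : M₀))
      rw [heR]
      have : Structure.funMap (L := L) (φ.onFunction f') (⇑eR.symm ∘ v) =
          @Structure.funMap L₀ ↥S iN₀ n f' (⇑eR.symm ∘ v) := rfl
      rw [this, Embedding.map_fun]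
      exact congrArg _ (funext fun i => heRsymm (v i))
    · intro n r v
      show Structure.RelMap (L := L) (φ.onRelation r) (⇑eR.symm ∘ v) ↔ _
      have h1 : Structure.RelMap (L := L) (φ.onRelation r) (⇑eR.symm ∘ v) =
          @Structure.RelMap L₀ ↥S iN₀ n r (⇑eR.symm ∘ v) := rfl
      rw [h1, ← h.map_rel r (⇑eR.symm ∘ v)]
      show Structure.RelMap r (⇑h ∘ (⇑eR.symm ∘ v)) ↔ Structure.RelMap r fun i => ((v i : M₀))
      exact iff_of_eq (congrArg _ (funext fun i => heRsymm (v i)))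
  let C' : Cond φ M₀ := ⟨R, strR, reduct_eq_R⟩
  let hL : @FirstOrder.Language.Equiv L ↥S ↥R _ strR := _root_.Equiv.inducedStructureEquiv eR
  have hC'K : C'.bundled ∈ K := hK.isoClosed ⟨↥S, inferInstance⟩ C'.bundled ⟨hL⟩ hNK
  -- build B*
  let k : B.carrier → M₀ := fun b => h (j₁ᵣ b)
  have hkinj : Function.Injective k := fun a b hab =>
    j₁ᵣ.injective (h.injective hab)
  have hfunmemB : ∀ {n : ℕ} (f' : L₀.Functions n), ClosedUnder f' (Set.range k) := by
    intro n f' v hv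
    choose w hw using hv
    refine ⟨Structure.funMap (L := L) (φ.onFunction f') w, ?_⟩
    show h (j₁ᵣ (Structure.funMap (L := L) (φ.onFunction f') w)) = _
    rw [j₁ᵣ.map_fun]
    have : Structure.funMap (L := L) (φ.onFunction f') (⇑j₁ᵣ ∘ w) =
        @Structure.funMap L₀ ↥S iN₀ n f' (⇑j₁ᵣ ∘ w) := rfl
    rw [this, Embedding.map_fun]
    exact congrArg _ (funext fun i => hw i)
  let RB : L₀.Substructure M₀ := ⟨Set.range k, hfunmemB⟩
  let eB : B.carrier ≃ ↥RB := Equiv.ofInjective k hkinj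
  have heB : ∀ b : B.carrier, ((eB b : ↥RB) : M₀) = k b := fun b => rfl
  have heBsymm : ∀ b : ↥RB, k (eB.symm b) = (b : M₀) := fun b => by
    conv_rhs => rw [← Equiv.apply_symm_apply eB b]
    rfl
  letI strB : L.Structure ↥RB := _root_.Equiv.inducedStructure eB
  have reduct_eq_B : @FirstOrder.Language.LHom.reduct L₀ L φ ↥RB strB =
      Substructure.inducedStructure := by
    apply structure_ext'
    · intro n f' v
      apply Subtype.ext
      show (eB (Structure.funMap (L := L) (φ.onFunction f') (⇑eB.symm ∘ v)) : M₀) =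
        Structure.funMap f' fun i => ((v i : M₀))
      rw [heB]
      show h (j₁ᵣ (Structure.funMap (L := L) (φ.onFunction f') (⇑eB.symm ∘ v))) = _
      rw [j₁ᵣ.map_fun]
      have h2 : Structure.funMap (L := L) (φ.onFunction f') (⇑j₁ᵣ ∘ (⇑eB.symm ∘ v)) =
          @Structure.funMap L₀ ↥S iN₀ n f' (⇑j₁ᵣ ∘ (⇑eB.symm ∘ v)) := rfl
      rw [h2, Embedding.map_fun]
      exact congrArg _ (funext fun i => heBsymm (v i))
    · intro n r v
      show Structure.RelMap (L := L) (φ.onRelation r) (⇑eB.symm ∘ v) ↔ _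
      rw [← j₁ᵣ.map_rel (φ.onRelation r) (⇑eB.symm ∘ v)]
      have h1 : Structure.RelMap (L := L) (φ.onRelation r) (⇑j₁ᵣ ∘ (⇑eB.symm ∘ v)) =
          @Structure.RelMap L₀ ↥S iN₀ n r (⇑j₁ᵣ ∘ (⇑eB.symm ∘ v)) := rfl
      rw [h1, ← h.map_rel r (⇑j₁ᵣ ∘ (⇑eB.symm ∘ v))]
      show Structure.RelMap r (⇑h ∘ (⇑j₁ᵣ ∘ (⇑eB.symm ∘ v))) ↔
        Structure.RelMap r fun i => ((v i : M₀))
      exact iff_of_eq (congrArg _ (funext fun i => heBsymm (v i)))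
  let Bs : Cond φ M₀ := ⟨RB, strB, reduct_eq_B⟩
  let eBL : @FirstOrder.Language.Equiv L B.carrier ↥RB _ strB := _root_.Equiv.inducedStructureEquiv eB
  have hBsK : Bs.bundled ∈ K := hK.isoClosed B.bundled Bs.bundled ⟨eBL⟩ hB
  -- commuting square on A
  have hj₁j₂ : ∀ a : A.carrier, j₁ᵣ (f a) = j₂ᵣ (g a) := by
    intro a
    apply Subtype.ext
    show j₁ (f a) = j₂ (g a)
    exact congrFun (congrArg (fun (F : A.bundled ↪[L] D) => ⇑F) hcomm) a
  refine ⟨C', hC'K, ⟨hL.toEmbedding.comp j₂ᵣ, fun a => KF a⟩, Bs, hBsK, ?_, ?_, eBL, ?_⟩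
  · -- A.le Bs
    refine ⟨eBL.toEmbedding.comp f, fun a => ?_⟩
    show ((eB (f a) : ↥RB) : M₀) = (a : M₀)
    rw [heB]
    show h (j₁ᵣ (f a)) = _
    rw [hj₁j₂ a, KF (g a), hg a]
  · -- Bs.le C'
    refine ⟨hL.toEmbedding.comp (j₁ᵣ.comp eBL.symm.toEmbedding), fun b => ?_⟩
    show ((eR (j₁ᵣ (eBL.symm b)) : ↥R) : M₀) = (b : M₀)
    rw [heR]
    show k (eBL.symm b) = (b : M₀)
    exact heBsymm b
  · -- eBL fixes A pointwise
    intro xb hxb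
    let a : ↥A.carrier := ⟨(xb : M₀), hxb⟩
    have hfa : f a = xb := Subtype.ext (hf a)
    show ((eB xb : ↥RB) : M₀) = (xb : M₀)
    rw [heB]
    show h (j₁ᵣ xb) = _
    rw [← hfa, hj₁j₂ a, KF (g a), hg a, hf a]

end
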